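/- For any complex numbers a, b (values u(x), u(y)), any unimodular complex number e (of the form e^{iθ}), any positive reals p, q (values u_δ(x), u_δ(y)) with p ≥ |a| and q ≥ |b|, and any nonnegative reals φ₁, φ₂, the real part of (a − b·e)·(conj(a)/p · φ₁ − conj(b)/q · φ₂ · conj(e)) is at least |a|²/p · φ₁ + |b|²/q · φ₂ − |a|·|b|/q · φ₂ − |b|·|a|/p · φ₁. -/

import Mathlib

theorem stmt_4 (a b e : ℂ) (he : ‖e‖ = 1) (p q φ₁ φ₂ : ℝ)
    (hp : 0 < p) (hq : 0 < q) (hpa : ‖a‖ ≤ p) (hqb : ‖b‖ ≤ q)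
    (hφ₁ : 0 ≤ φ₁) (hφ₂ : 0 ≤ φ₂) :
    ‖a‖ ^ 2 / p * φ₁ + ‖b‖ ^ 2 / q * φ₂
        - ‖a‖ * ‖b‖ / q * φ₂
        - ‖b‖ * ‖a‖ / p * φ₁ ≤
      ((a - b * e) *
        ((starRingEnd ℂ) a / (p : ℂ) * (φ₁ : ℂ)
          - (starRingEnd ℂ) b / (q : ℂ) * (φ₂ : ℂ) * (starRingEnd ℂ) e)).re := by
  set z := a * (starRingEnd ℂ) b * (starRingEnd ℂ) e with hz
  have hee : e * (starRingEnd ℂ) e = 1 := by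
    rw [Complex.mul_conj, Complex.normSq_eq_norm_sq, he]; norm_num
  have haa : a * (starRingEnd ℂ) a = (‖a‖ ^ 2 : ℝ) := by
    rw [Complex.mul_conj, Complex.normSq_eq_norm_sq]
  have hbb : b * (starRingEnd ℂ) b = (‖b‖ ^ 2 : ℝ) := by
    rw [Complex.mul_conj, Complex.normSq_eq_norm_sq]
  have hexp : (a - b * e) *
        ((starRingEnd ℂ) a / (p : ℂ) * (φ₁ : ℂ)
          - (starRingEnd ℂ) b / (q : ℂ) * (φ₂ : ℂ) * (starRingEnd ℂ) e)
      = (‖a‖ ^ 2 : ℝ) * ((φ₁/p : ℝ)) + (‖b‖ ^ 2 : ℝ) * ((φ₂/q : ℝ))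
        - (starRingEnd ℂ) z * ((φ₁/p : ℝ)) - z * ((φ₂/q : ℝ)) := by
    have hp' : (p : ℂ) ≠ 0 := by exact_mod_cast hp.ne'
    have hq' : (q : ℂ) ≠ 0 := by exact_mod_cast hq.ne'
    rw [hz]
    push_cast
    simp only [map_mul, Complex.conj_conj]
    push_cast at haa hbb
    linear_combination ((φ₁:ℂ)/(p:ℂ))*haa
      + (b*(starRingEnd ℂ) b*(φ₂:ℂ)/(q:ℂ))*hee
      + ((φ₂:ℂ)/(q:ℂ))*hbb
  have hre : ((a - b * e) *
        ((starRingEnd ℂ) a / (p : ℂ) * (φ₁ : ℂ)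
          - (starRingEnd ℂ) b / (q : ℂ) * (φ₂ : ℂ) * (starRingEnd ℂ) e)).re
      = ‖a‖ ^ 2 * (φ₁/p) + ‖b‖ ^ 2 * (φ₂/q)
        - z.re * (φ₁/p) - z.re * (φ₂/q) := by
    rw [hexp]
    simp [Complex.sub_re, Complex.add_re, Complex.mul_re, Complex.ofReal_re, Complex.ofReal_im,
      ← Complex.ofReal_pow]
  have hzabs : |z.re| ≤ ‖a‖ * ‖b‖ := by
    calc |z.re| ≤ ‖z‖ := Complex.abs_re_le_norm z
    _ = ‖a‖ * ‖b‖ := by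
        simp [hz, map_mul, he, Complex.norm_conj]
  rw [hre]
  have h1 : z.re * (φ₁/p) ≤ ‖a‖ * ‖b‖ * (φ₁/p) := by
    apply mul_le_mul_of_nonneg_right ((le_abs_self _).trans hzabs)
    positivity
  have h2 : z.re * (φ₂/q) ≤ ‖a‖ * ‖b‖ * (φ₂/q) := by
    apply mul_le_mul_of_nonneg_right ((le_abs_self _).trans hzabs)
    positivity
  have e1 : ‖a‖ ^ 2 / p * φ₁ = ‖a‖ ^ 2 * (φ₁/p) := by ring
  have e2 : ‖b‖ ^ 2 / q * φ₂ = ‖b‖ ^ 2 * (φ₂/q) := by ring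
  have e3 : ‖a‖ * ‖b‖ / q * φ₂ = ‖a‖ * ‖b‖ * (φ₂/q) := by ring
  have e4 : ‖b‖ * ‖a‖ / p * φ₁ = ‖a‖ * ‖b‖ * (φ₁/p) := by ring
  linarith
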